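/- Let k be a non-negative integer, P a finite propositional logic program, and U a model of the theory T₀(P) with |M(U)| ≤ k. Then M(U) is a stable model of P. -/
import Mathlib


open scoped Classical

noncomputable section

/-- A propositional logic program rule: a head atom, a finite positive body and a
finite negative body. -/
structure LPRule (α : Type) where
  head : α
  pos : Finset α
  neg : Finset α
deriving DecidableEq

/-- A logic program is a finite set of rules. -/
abbrev LProgram (α : Type) := Finset (LPRule α)

variable {α : Type} [DecidableEq α]

/-- `horn r`: the Horn rule with the same head and positive body as `r`
and empty negative body. -/
def LPRule.horn (r : LPRule α) : LPRule α := ⟨r.head, r.pos, ∅⟩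

/-- A rule `r` is proper if `h(r) ∉ b⁺(r)` and `b⁺(r) ∩ b⁻(r) = ∅`. -/
def LPRule.proper (r : LPRule α) : Prop := r.head ∉ r.pos ∧ r.pos ∩ r.neg = ∅

/-- `At(P)`: the set of atoms occurring in `P`. -/
def atomsP (P : LProgram α) : Finset α := P.sup (fun r => insert r.head (r.pos ∪ r.neg))

/-- `h(P)`: the set of heads of rules of `P`. -/
def headsP (P : LProgram α) : Finset α := P.image LPRule.head

/-- `Neg(P)`: the set of atoms occurring negated in `P`. -/
def negP (P : LProgram α) : Finset α := P.sup LPRule.neg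

/-- The least model of a (Horn) program `Q`, given as a set of rules (negative bodies
are ignored; Horn rules have empty negative bodies): the least set `M` of atoms such
that `h(r) ∈ M` whenever `r ∈ Q` and `b⁺(r) ⊆ M`. -/
def LM (Q : Set (LPRule α)) : Set α :=
  ⋂₀ {M : Set α | ∀ r ∈ Q, (↑r.pos : Set α) ⊆ M → r.head ∈ M}

/-- The reduct `P^S`: delete every rule whose negative body meets `S` and remove the
negative bodies of the remaining rules. -/
def reduct (P : LProgram α) (S : Set α) : Set (LPRule α) :=
  LPRule.horn '' {r | r ∈ P ∧ (↑r.neg : Set α) ∩ S = ∅}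

/-- `M` is a stable model of `P` if `M = LM (P^M)`. -/
def isStable (P : LProgram α) (M : Set α) : Prop :=
  M = LM (reduct P M)

/-- The propositional atoms of the encoding `T(P)`: for each program atom `q`,
atoms `c(q)`, `c(q,i)`, `c⁻(q,i)` and `d(q,i)`. -/
inductive EncAtom (α : Type) where
  | c : α → EncAtom α
  | ci : α → ℕ → EncAtom α
  | cm : α → ℕ → EncAtom α
  | d : α → ℕ → EncAtom α
deriving DecidableEq

/-- `U` satisfies `F₁(q,i) = c⁻(q,i) ↔ (c(q,1) ∨ … ∨ c(q,i-1))`. -/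
def SatF1 (U : Set (EncAtom α)) (q : α) (i : ℕ) : Prop :=
  EncAtom.cm q i ∈ U ↔ ∃ j, 1 ≤ j ∧ j ≤ i - 1 ∧ EncAtom.ci q j ∈ U

/-- `U` satisfies `F₂(q) = c(q) ↔ (c(q,1) ∨ … ∨ c(q,k+1))`. -/
def SatF2 (k : ℕ) (U : Set (EncAtom α)) (q : α) : Prop :=
  EncAtom.c q ∈ U ↔ ∃ j, 1 ≤ j ∧ j ≤ k + 1 ∧ EncAtom.ci q j ∈ U

/-- `U` satisfies `F₃(r,i)`; for `i ≥ 2` this is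
`c⁻(a₁,i) ∧ … ∧ c⁻(a_s,i) ∧ ¬c(b₁) ∧ … ∧ ¬c(b_t) ∧ ¬c⁻(q,i)`, for `i = 1` it is
`false` when `b⁺(r) ≠ ∅` and `¬c(b₁) ∧ … ∧ ¬c(b_t)` when `b⁺(r) = ∅`. -/
def SatF3 (U : Set (EncAtom α)) (r : LPRule α) (i : ℕ) : Prop :=
  if i = 1 then r.pos = ∅ ∧ ∀ b ∈ r.neg, EncAtom.c b ∉ U
  else (∀ a ∈ r.pos, EncAtom.cm a i ∈ U) ∧ (∀ b ∈ r.neg, EncAtom.c b ∉ U) ∧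
    EncAtom.cm r.head i ∉ U

/-- `U` satisfies `F₄(q,i) = c(q,i) ↔ (F₃(r₁,i) ∨ … ∨ F₃(r_v,i))`, where
`r₁,…,r_v` are all rules of `P` with head `q`. -/
def SatF4 (P : LProgram α) (U : Set (EncAtom α)) (q : α) (i : ℕ) : Prop :=
  EncAtom.ci q i ∈ U ↔ ∃ r ∈ P, r.head = q ∧ SatF3 U r i

/-- `U` is a model of the theory `T₀(P)`. -/
def ModelT0 (k : ℕ) (P : LProgram α) (U : Set (EncAtom α)) : Prop :=
  (∀ q ∈ atomsP P, ∀ i, 2 ≤ i → i ≤ k + 1 → SatF1 U q i) ∧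
  (∀ q ∈ atomsP P, SatF2 k U q) ∧
  (∀ q ∈ atomsP P, ∀ i, 1 ≤ i → i ≤ k + 1 → SatF4 P U q i)

/-- `M(U) = {q ∈ At(P) : c(q) ∈ U}`. -/
def MU (P : LProgram α) (U : Set (EncAtom α)) : Finset α :=
  (atomsP P).filter (fun q => EncAtom.c q ∈ U)

lemma mem_atomsP_head {P : LProgram α} {r : LPRule α} (hr : r ∈ P) :
    r.head ∈ atomsP P :=
  Finset.mem_sup.2 ⟨r, hr, by simp⟩

lemma mem_atomsP_pos {P : LProgram α} {r : LPRule α} (hr : r ∈ P) {a : α}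
    (ha : a ∈ r.pos) : a ∈ atomsP P :=
  Finset.mem_sup.2 ⟨r, hr, by simp [ha]⟩

lemma mem_atomsP_neg {P : LProgram α} {r : LPRule α} (hr : r ∈ P) {b : α}
    (hb : b ∈ r.neg) : b ∈ atomsP P :=
  Finset.mem_sup.2 ⟨r, hr, by simp [hb]⟩

/-- if `U` is a model of `T₀(P)` with `|M(U)| ≤ k`, then `M(U)` is a
stable model of `P`. -/
theorem MU_stable (k : ℕ) (P : LProgram α) (U : Set (EncAtom α))
    (hU : ModelT0 k P U) (hcard : (MU P U).card ≤ k) :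
    isStable P ↑(MU P U) := by
  classical
  obtain ⟨h1, h2, h4⟩ := hU
  set M : Finset α := MU P U with hMdef
  have hMmem : ∀ q, q ∈ M ↔ q ∈ atomsP P ∧ EncAtom.c q ∈ U := by
    intro q; simp [hMdef, MU]
  -- Part A : M ⊆ LM (reduct P M)
  have partA : ∀ i, ∀ q ∈ atomsP P, EncAtom.ci q i ∈ U → 1 ≤ i → i ≤ k + 1 →
      q ∈ LM (reduct P ↑M) := by
    intro i
    induction i using Nat.strong_induction_on with
    | _ i ih =>
      intro q hq hci h1i hik
      rw [LM, Set.mem_sInter]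
      intro M' hM'
      obtain ⟨r, hrP, hhead, hF3⟩ := (h4 q hq i h1i hik).1 hci
      have hnegU : ∀ b ∈ r.neg, EncAtom.c b ∉ U := by
        rcases eq_or_ne i 1 with h | h
        · subst h; rw [SatF3, if_pos rfl] at hF3; exact hF3.2
        · rw [SatF3, if_neg h] at hF3; exact hF3.2.1
      have hnegM : (↑r.neg : Set α) ∩ ↑M = ∅ := by
        ext b
        simp only [Set.mem_inter_iff, Set.mem_empty_iff_false, iff_false, not_and,
          Finset.mem_coe]
        intro hb hbM
        exact hnegU b hb ((hMmem b).1 hbM).2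
      have hred : r.horn ∈ reduct P ↑M := ⟨r, ⟨hrP, hnegM⟩, rfl⟩
      have hhd := hM' r.horn hred
      rcases eq_or_ne i 1 with h | h
      · subst h
        rw [SatF3, if_pos rfl] at hF3
        have : (↑r.horn.pos : Set α) ⊆ M' := by
          simp [LPRule.horn, hF3.1]
        have := hhd this
        rwa [LPRule.horn, hhead] at this
      · rw [SatF3, if_neg h] at hF3
        have h2i : 2 ≤ i := by omega
        have hsub : (↑r.horn.pos : Set α) ⊆ M' := by
          intro a ha
          simp only [LPRule.horn, Finset.mem_coe] at ha
          have haA : a ∈ atomsP P := mem_atomsP_pos hrP ha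
          obtain ⟨j, hj1, hj2, hcj⟩ := (h1 a haA i h2i hik).1 (hF3.1 a ha)
          have hjlt : j < i := by omega
          have := ih j hjlt a haA hcj hj1 (by omega)
          rw [LM, Set.mem_sInter] at this
          exact this M' hM'
        have := hhd hsub
        rwa [LPRule.horn, hhead] at this
  have incA : (↑M : Set α) ⊆ LM (reduct P ↑M) := by
    intro q hq
    rw [Finset.mem_coe, hMmem] at hq
    obtain ⟨j, hj1, hj2, hcj⟩ := (h2 q hq.1).1 hq.2
    exact partA j q hq.1 hcj hj1 hj2
  -- levels
  set m : α → ℕ := fun p =>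
    if h : ∃ j, 1 ≤ j ∧ j ≤ k + 1 ∧ EncAtom.ci p j ∈ U then Nat.find h else 0
    with hmdef
  have exLev : ∀ p ∈ M, ∃ j, 1 ≤ j ∧ j ≤ k + 1 ∧ EncAtom.ci p j ∈ U := by
    intro p hp
    rw [hMmem] at hp
    exact (h2 p hp.1).1 hp.2
  have mprop : ∀ p ∈ M, 1 ≤ m p ∧ m p ≤ k + 1 ∧ EncAtom.ci p (m p) ∈ U := by
    intro p hp
    have h := exLev p hp
    have : m p = Nat.find h := by rw [hmdef]; exact dif_pos h
    rw [this]
    exact Nat.find_spec h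
  have mle : ∀ p ∈ M, ∀ j, 1 ≤ j → j ≤ k + 1 → EncAtom.ci p j ∈ U → m p ≤ j := by
    intro p hp j hj1 hj2 hcj
    have h := exLev p hp
    have hm : m p = Nat.find h := by rw [hmdef]; exact dif_pos h
    rw [hm]
    exact Nat.find_le ⟨hj1, hj2, hcj⟩
  have mmin : ∀ p ∈ M, ∀ j, 1 ≤ j → j < m p → EncAtom.ci p j ∉ U := by
    intro p hp j hj1 hjlt hcj
    have h := exLev p hp
    have hm : m p = Nat.find h := by rw [hmdef]; exact dif_pos h
    rw [hm] at hjlt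
    have hjk : j ≤ k + 1 := by
      have := (mprop p hp).2.1; omega
    exact Nat.find_min h hjlt ⟨hj1, hjk, hcj⟩
  -- no gaps in levels
  have nogap : ∀ i, 2 ≤ i → ∀ p ∈ M, m p = i → ∃ p' ∈ M, m p' = i - 1 := by
    intro i h2i p hp hmp
    have hpA : p ∈ atomsP P := ((hMmem p).1 hp).1
    obtain ⟨h1m, hmk, hci⟩ := mprop p hp
    rw [hmp] at hci hmk
    obtain ⟨r', hr'P, hhead, hF3⟩ := (h4 p hpA i (by omega) hmk).1 hci
    rw [SatF3, if_neg (by omega)] at hF3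
    obtain ⟨hposm, hnegm, hheadm⟩ := hF3
    by_cases hpe : r'.pos = ∅
    · exfalso
      have hF31 : SatF3 U r' 1 := by rw [SatF3, if_pos rfl]; exact ⟨hpe, hnegm⟩
      have hci1 := (h4 p hpA 1 le_rfl (by omega)).2 ⟨r', hr'P, hhead, hF31⟩
      exact mmin p hp 1 le_rfl (by omega) hci1
    · obtain ⟨a₀, ha₀⟩ := Finset.nonempty_iff_ne_empty.2 hpe
      have haM : ∀ a ∈ r'.pos, a ∈ M ∧ 1 ≤ m a ∧ m a ≤ i - 1 := by
        intro a ha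
        have haA : a ∈ atomsP P := mem_atomsP_pos hr'P ha
        obtain ⟨j, hj1, hj2, hcj⟩ := (h1 a haA i h2i hmk).1 (hposm a ha)
        have haMem : a ∈ M := (hMmem a).2 ⟨haA, (h2 a haA).2 ⟨j, hj1, by omega, hcj⟩⟩
        refine ⟨haMem, (mprop a haMem).1, le_trans (mle a haMem j hj1 (by omega) hcj) hj2⟩
      by_cases hlast : ∃ a ∈ r'.pos, m a = i - 1
      · obtain ⟨a, haP, hma⟩ := hlast
        exact ⟨a, (haM a haP).1, hma⟩
      · exfalso
        push_neg at hlast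
        have hall : ∀ a ∈ r'.pos, m a ≤ i - 2 := by
          intro a ha
          have := (haM a ha).2.2
          have := hlast a ha
          omega
        have h3i : 3 ≤ i := by
          have := (haM a₀ ha₀).2.1
          have := hall a₀ ha₀
          omega
        have hF3' : SatF3 U r' (i - 1) := by
          rw [SatF3, if_neg (by omega), hhead]
          refine ⟨?_, hnegm, ?_⟩
          · intro a ha
            have haA : a ∈ atomsP P := mem_atomsP_pos hr'P ha
            refine (h1 a haA (i - 1) (by omega) (by omega)).2
              ⟨m a, (haM a ha).2.1, by have := hall a ha; omega, ?_⟩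
            exact (mprop a (haM a ha).1).2.2
          · intro hmm
            obtain ⟨j, hj1, hj2, hcj⟩ := (h1 p hpA (i - 1) (by omega) (by omega)).1 hmm
            exact mmin p hp j hj1 (by omega) hcj
        have hci' := (h4 p hpA (i - 1) (by omega) (by omega)).2 ⟨r', hr'P, hhead, hF3'⟩
        exact mmin p hp (i - 1) (by omega) (by omega) hci'
  -- downward closure of the level set via nogap
  have key : ∀ n, ∀ p ∈ M, ∀ i, 1 ≤ i → i + n = m p → ∃ p' ∈ M, m p' = i := by
    intro n
    induction n with
    | zero => intro p hp i _ h; exact ⟨p, hp, by omega⟩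
    | succ n ihn =>
      intro p hp i hi1 h
      obtain ⟨p', hp', hmp'⟩ := nogap (i + n + 1) (by omega) p hp (by omega)
      exact ihn p' hp' i hi1 (by omega)
  -- every level of an element of M is at most k
  have mbound : ∀ p ∈ M, m p ≤ k := by
    intro p hp
    by_contra hgt
    push_neg at hgt
    have hmk : m p = k + 1 := by have := (mprop p hp).2.1; omega
    -- the levels 1..k+1 are all realized, giving k+1 ≤ |M| ≤ k
    have hsub : Finset.Icc 1 (k + 1) ⊆ M.image m := by
      intro j hj
      rw [Finset.mem_Icc] at hj
      obtain ⟨p', hp', hmp'⟩ := key (k + 1 - j) p hp j hj.1 (by omega)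
      exact Finset.mem_image.2 ⟨p', hp', hmp'⟩
    have h1c : (Finset.Icc 1 (k + 1)).card = k + 1 := by
      rw [Nat.card_Icc]; omega
    have h2c := Finset.card_le_card hsub
    have h3c := Finset.card_image_le (f := m) (s := M)
    omega
  -- Part B : LM (reduct P M) ⊆ M
  have partB : LM (reduct P ↑M) ⊆ (↑M : Set α) := by
    apply Set.sInter_subset_of_mem
    intro s hs hpos
    obtain ⟨r, ⟨hrP, hneg⟩, rfl⟩ := hs
    simp only [LPRule.horn] at hpos ⊢
    by_contra hq
    have hqA : r.head ∈ atomsP P := mem_atomsP_head hrP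
    have hcq : EncAtom.c r.head ∉ U := fun h =>
      hq (Finset.mem_coe.2 ((hMmem r.head).2 ⟨hqA, h⟩))
    have hnegU : ∀ b ∈ r.neg, EncAtom.c b ∉ U := by
      intro b hb hcb
      have : b ∈ (↑r.neg : Set α) ∩ ↑M :=
        ⟨hb, Finset.mem_coe.2 ((hMmem b).2 ⟨mem_atomsP_neg hrP hb, hcb⟩)⟩
      rw [hneg] at this
      exact this
    by_cases hpe : r.pos = ∅
    · have hF31 : SatF3 U r 1 := by rw [SatF3, if_pos rfl]; exact ⟨hpe, hnegU⟩
      have hci1 := (h4 r.head hqA 1 le_rfl (by omega)).2 ⟨r, hrP, rfl, hF31⟩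
      exact hcq ((h2 r.head hqA).2 ⟨1, le_rfl, by omega, hci1⟩)
    · obtain ⟨a₀, ha₀⟩ := Finset.nonempty_iff_ne_empty.2 hpe
      have hposM : ∀ a ∈ r.pos, a ∈ M := fun a ha => Finset.mem_coe.1 (hpos ha)
      -- the maximal level among M
      have hMne : M.Nonempty := ⟨a₀, hposM a₀ ha₀⟩
      set N := (M.image m).max' (hMne.image m) with hNdef
      have hN1 : 1 ≤ N := by
        have : m a₀ ≤ N :=
          Finset.le_max' _ _ (Finset.mem_image.2 ⟨a₀, hposM a₀ ha₀, rfl⟩)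
        have := (mprop a₀ (hposM a₀ ha₀)).1
        omega
      have hNk : N ≤ k := by
        obtain ⟨p, hpM, hpN⟩ := Finset.mem_image.1 ((M.image m).max'_mem (hMne.image m))
        have := mbound p hpM
        omega
      have hallN : ∀ p ∈ M, m p ≤ N := fun p hp =>
        Finset.le_max' _ _ (Finset.mem_image.2 ⟨p, hp, rfl⟩)
      have hF3' : SatF3 U r (N + 1) := by
        rw [SatF3, if_neg (by omega)]
        refine ⟨?_, hnegU, ?_⟩
        · intro a ha
          have haA : a ∈ atomsP P := mem_atomsP_pos hrP ha
          have haMem := hposM a ha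
          refine (h1 a haA (N + 1) (by omega) (by omega)).2
            ⟨m a, (mprop a haMem).1, by have := hallN a haMem; omega, ?_⟩
          exact (mprop a haMem).2.2
        · intro hmm
          obtain ⟨j, hj1, hj2, hcj⟩ := (h1 r.head hqA (N + 1) (by omega) (by omega)).1 hmm
          exact hcq ((h2 r.head hqA).2 ⟨j, hj1, by omega, hcj⟩)
      have hci' := (h4 r.head hqA (N + 1) (by omega) (by omega)).2 ⟨r, hrP, rfl, hF3'⟩
      exact hcq ((h2 r.head hqA).2 ⟨N + 1, by omega, by omega, hci'⟩)
  exact Set.Subset.antisymm incA partB
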